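/- arXiv:1503.03860 — 12 statements merged into one kernel-verified Lean document; each statement's English description precedes it below -/
import Mathlib

section
/- If n = km > 1 is a spoof odd perfect number, then k is an odd perfect square and m ≡ 1 (mod 4). -/
open ArithmeticFunction
open scoped ArithmeticFunction.sigma

lemma square_of_even_factorization {k : ℕ} (hk : k ≠ 0)
    (h : ∀ p, Even (k.factorization p)) : IsSquare k := by
  use k.factorization.prod fun p e => p ^ (e / 2)
  simp only [Finsupp.prod]
  rw [← Finset.prod_mul_distrib]
  conv_lhs => rw [← Nat.factorization_prod_pow_eq_self hk]
  simp only [Finsupp.prod]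
  refine Finset.prod_congr rfl fun p hp => ?_
  rw [← pow_add]
  congr 1
  have := (h p).two_dvd
  omega

lemma odd_sigma_square {k : ℕ} (hk : Odd k) (hk0 : k ≠ 0) (hσ : Odd (σ 1 k)) :
    IsSquare k := by
  apply square_of_even_factorization hk0
  intro p
  by_cases hp : p ∈ k.primeFactors
  · have hpp : p.Prime := Nat.prime_of_mem_primeFactors hp
    have hodd : Odd p := hpp.odd_of_ne_two (by
      rintro rfl
      obtain ⟨c, hc⟩ := Nat.dvd_of_mem_primeFactors hp
      exact (Nat.not_even_iff_odd.2 hk) ⟨c, by omega⟩)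
    have hmf := (isMultiplicative_sigma (k := 1)).multiplicative_factorization (σ 1) hk0
    rw [hmf, Finsupp.prod] at hσ
    have hfac : Odd (σ 1 (p ^ k.factorization p)) :=
      Odd.of_dvd_nat hσ (Finset.dvd_prod_of_mem (fun p => σ 1 (p ^ k.factorization p))
        (show p ∈ k.factorization.support by rw [Nat.support_factorization]; exact hp))
    rw [sigma_one_apply_prime_pow hpp] at hfac
    -- sum of (e+1) odd terms
    set e := k.factorization p with he
    have hsum : (∑ i ∈ Finset.range (e + 1), p ^ i) % 2 = (e + 1) % 2 := by
      induction e with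
      | zero => simp
      | succ n ih =>
        rw [Finset.sum_range_succ, Nat.add_mod, ih]
        have : p ^ (n + 1) % 2 = 1 := Nat.odd_iff.1 (hodd.pow)
        omega
    rw [Nat.odd_iff, hsum] at hfac
    exact Nat.even_iff.2 (by omega)
  · have : k.factorization p = 0 := Finsupp.notMem_support_iff.1
      (by rw [Nat.support_factorization]; exact hp)
    rw [this]; exact Even.zero

theorem stmt_0 (k m : ℕ) (hk : 1 < k) (hm : 1 < m) (hodd : Odd (k * m))
    (hspoof : σ 1 k * (m + 1) = 2 * (k * m)) :
    Odd k ∧ IsSquare k ∧ m % 4 = 1 := by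
  have hkodd : Odd k := (Nat.Odd.of_mul_left hodd)
  have hmodd : Odd m := (Nat.Odd.of_mul_right hodd)
  obtain ⟨t, ht⟩ : ∃ t, m + 1 = 2 * t := by
    rcases hmodd with ⟨j, hj⟩; exact ⟨j + 1, by omega⟩
  have key : σ 1 k * t = k * m := by
    have h2 : 2 * (σ 1 k * t) = 2 * (k * m) := by rw [← hspoof, ht]; ring
    omega
  have hσodd : Odd (σ 1 k) := by
    rw [← key] at hodd
    exact Nat.Odd.of_mul_left hodd
  have htodd : Odd t := by
    rw [← key] at hodd
    exact Nat.Odd.of_mul_right hodd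
  refine ⟨hkodd, odd_sigma_square hkodd (by omega) hσodd, ?_⟩
  rcases htodd with ⟨j, hj⟩
  omega
end

section
/- If n = km > 1 is a spoof odd perfect number, then gcd(k, σ(k)) = 2k − σ(k). -/
open ArithmeticFunction
open scoped ArithmeticFunction.sigma

theorem stmt_2 (k m : ℕ) (hk : 1 < k) (hm : 1 < m) (hodd : Odd (k * m))
    (hspoof : σ 1 k * (m + 1) = 2 * (k * m)) :
    Nat.gcd k (σ 1 k) = 2 * k - σ 1 k := by
  set s := σ 1 k with hs
  have hm0 : 0 < m := by omega
  have hs0 : 0 < s := by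
    rcases Nat.eq_zero_or_pos s with h | h
    · rw [h] at hspoof; simp at hspoof; omega
    · exact h
  have hlt : s < 2 * k := by nlinarith
  -- s = m * (2k - s)
  have hkey : s = m * (2 * k - s) := by
    have h3 : m * (2 * k) = m * s + s := by nlinarith [hspoof]
    rw [Nat.mul_sub, h3, Nat.add_sub_cancel_left]
  -- m odd
  have hmodd : Odd m := (Nat.odd_mul.mp hodd).2
  obtain ⟨c, hc⟩ := hmodd
  set d := 2 * k - s with hd
  have hd0 : 0 < d := by omega
  have hk' : k = d * (c + 1) := by
    have h5 : s = m * d := hkey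
    have h6 : d * (m + 1) = m * d + d := by ring
    have h7 : 2 * k = d * (m + 1) := by omega
    have h8 : d * (m + 1) = 2 * (d * (c + 1)) := by rw [hc]; ring
    omega
  have hsd : s = d * (2 * c + 1) := by
    rw [hkey, hc]; ring
  have hcop : Nat.Coprime (c + 1) (2 * c + 1) := by
    have h1 : Nat.gcd (c + 1) (2 * c + 1) = Nat.gcd (c + 1) c := by
      have : 2 * c + 1 = c + (c + 1) := by ring
      rw [this, Nat.gcd_add_self_right]
    have h2 : Nat.gcd (c + 1) c = 1 := by rw [Nat.gcd_self_add_left c 1]; exact Nat.gcd_one_left c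
    unfold Nat.Coprime
    rw [h1, h2]
  calc Nat.gcd k s = Nat.gcd (d * (c + 1)) (d * (2 * c + 1)) := by rw [hk', hsd]
    _ = d * Nat.gcd (c + 1) (2 * c + 1) := Nat.gcd_mul_left d _ _
    _ = d := by rw [hcop, mul_one]
end

section
/- Let n = km > 1 be a spoof odd perfect number. If σ(k) = m, then gcd(k, σ(k)) = 1, σ(k) = 2k − 1 (that is, k is almost perfect), and k < m. -/
open ArithmeticFunction
open scoped ArithmeticFunction.sigma

theorem stmt_3 (k m : ℕ) (hk : 1 < k) (hm : 1 < m) (hodd : Odd (k * m))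
    (hspoof : σ 1 k * (m + 1) = 2 * (k * m)) (hσ : σ 1 k = m) :
    Nat.gcd k (σ 1 k) = 1 ∧ σ 1 k = 2 * k - 1 ∧ k < m := by
  rw [hσ] at hspoof ⊢
  have hm1 : m + 1 = 2 * k := by
    have h : m * (m + 1) = m * (2 * k) := by ring_nf; ring_nf at hspoof; linarith
    exact Nat.eq_of_mul_eq_mul_left (by omega) h
  have hmval : m = 2 * k - 1 := by omega
  refine ⟨?_, hmval, by omega⟩
  have hd1 : Nat.gcd k m ∣ k := Nat.gcd_dvd_left _ _
  have hd2 : Nat.gcd k m ∣ m := Nat.gcd_dvd_right _ _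
  have hd3 : Nat.gcd k m ∣ 2 * k - m := Nat.dvd_sub (Dvd.dvd.mul_left hd1 2) hd2
  have : 2 * k - m = 1 := by omega
  rw [this] at hd3
  exact Nat.dvd_one.mp hd3
end

section
/- Let n = km > 1 be a spoof odd perfect number with m composite. Then 1 < 2k/σ(k) = (m+1)/m ≤ 10/9 and 9/5 ≤ σ(k)/k < 2 (in particular, k is deficient). -/
open ArithmeticFunction
open scoped ArithmeticFunction.sigma

theorem stmt_4 (k m : ℕ) (hk : 1 < k) (hm : 1 < m) (hodd : Odd (k * m))
    (hspoof : σ 1 k * (m + 1) = 2 * (k * m)) (hcomp : ¬ m.Prime) :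
    1 < (2 * k : ℚ) / (σ 1 k : ℚ) ∧ (2 * k : ℚ) / (σ 1 k : ℚ) = ((m : ℚ) + 1) / (m : ℚ) ∧
      ((m : ℚ) + 1) / (m : ℚ) ≤ 10 / 9 ∧
      (9 : ℚ) / 5 ≤ (σ 1 k : ℚ) / (k : ℚ) ∧ (σ 1 k : ℚ) / (k : ℚ) < 2 := by
  have hmodd : Odd m := (Nat.Odd.of_mul_right hodd)
  have hm9 : 9 ≤ m := by
    by_contra h
    push_neg at h
    interval_cases m <;>
      first
      | exact absurd hmodd (by decide)
      | exact hcomp (by norm_num)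
  have hσpos : 0 < σ 1 k := by
    have : 0 < k * m := by positivity
    nlinarith [hspoof]
  have S : (0:ℚ) < (σ 1 k : ℚ) := by exact_mod_cast hσpos
  have K : (0:ℚ) < (k : ℚ) := by exact_mod_cast (by omega : 0 < k)
  have M : (9:ℚ) ≤ (m : ℚ) := by exact_mod_cast hm9
  have key : (σ 1 k : ℚ) * ((m : ℚ) + 1) = 2 * ((k : ℚ) * (m : ℚ)) := by
    exact_mod_cast hspoof
  have Mpos : (0:ℚ) < (m : ℚ) := by linarith
  refine ⟨?_, ?_, ?_, ?_, ?_⟩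
  · rw [lt_div_iff₀ S]
    nlinarith
  · rw [div_eq_div_iff S.ne' Mpos.ne']
    nlinarith
  · rw [div_le_div_iff₀ Mpos (by norm_num)]
    linarith
  · rw [le_div_iff₀ K]
    nlinarith
  · rw [div_lt_iff₀ K]
    nlinarith
end

section
/- Let n = km > 1 be a spoof odd perfect number with m composite, and let s be the positive integer with s² = k (which exists since k is an odd perfect square). Then 3/√5 < σ(s)/s < 2. -/
open ArithmeticFunction
open scoped ArithmeticFunction.sigma


lemma aux_mul_le (s : ℕ) (hs : 0 < s) : s * σ 1 s ≤ σ 1 (s ^ 2) := by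
  rw [sigma_one_apply, sigma_one_apply, Finset.mul_sum]
  have h := Finset.sum_image (g := fun d => s * d) (f := fun x => x) (s := s.divisors)
    (fun a _ b _ h => Nat.eq_of_mul_eq_mul_left hs h)
  rw [← h]
  apply Finset.sum_le_sum_of_subset
  intro x hx
  simp only [Finset.mem_image] at hx
  obtain ⟨d, hd, rfl⟩ := hx
  rw [Nat.mem_divisors] at hd ⊢
  exact ⟨by rw [sq]; exact Nat.mul_dvd_mul dvd_rfl hd.1, by positivity⟩

lemma aux_sq_lt (s : ℕ) (hs : 1 < s) : σ 1 (s ^ 2) < σ 1 s ^ 2 := by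
  have hs0 : 0 < s := by omega
  rw [sigma_one_apply, sigma_one_apply]
  have hsum : (∑ d ∈ s.divisors, d) ^ 2 = ∑ p ∈ s.divisors ×ˢ s.divisors, p.1 * p.2 := by
    rw [sq, Finset.sum_mul_sum, Finset.sum_product]
  rw [hsum]
  have hinj : ∀ a ∈ (s ^ 2).divisors, ∀ b ∈ (s ^ 2).divisors,
      (Nat.gcd a s, a / Nat.gcd a s) = (Nat.gcd b s, b / Nat.gcd b s) → a = b := by
    intro a _ b _ h
    have h1 := congrArg Prod.fst h
    have h2 := congrArg Prod.snd h
    simp only at h1 h2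
    have ha : Nat.gcd a s * (a / Nat.gcd a s) = a := Nat.mul_div_cancel' (Nat.gcd_dvd_left a s)
    have hb : Nat.gcd b s * (b / Nat.gcd b s) = b := Nat.mul_div_cancel' (Nat.gcd_dvd_left b s)
    rw [← ha, h2, h1, hb]
  have him : ∑ e ∈ (s ^ 2).divisors, e
      = ∑ p ∈ (s ^ 2).divisors.image (fun e => (Nat.gcd e s, e / Nat.gcd e s)), p.1 * p.2 := by
    rw [Finset.sum_image hinj]
    exact Finset.sum_congr rfl fun e _ => (Nat.mul_div_cancel' (Nat.gcd_dvd_left e s)).symm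
  rw [him]
  have hsub : (s ^ 2).divisors.image (fun e => (Nat.gcd e s, e / Nat.gcd e s))
      ⊆ s.divisors ×ˢ s.divisors := by
    intro p hp
    simp only [Finset.mem_image] at hp
    obtain ⟨e, he, rfl⟩ := hp
    rw [Nat.mem_divisors] at he
    have hg0 : 0 < Nat.gcd e s := Nat.gcd_pos_of_pos_right e hs0
    have hgs : Nat.gcd e s ∣ s := Nat.gcd_dvd_right e s
    have hds : e / Nat.gcd e s ∣ s := by
      have h1 : e / Nat.gcd e s ∣ s ^ 2 / Nat.gcd e s := by
        obtain ⟨c, hc⟩ := he.1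
        exact ⟨c, by rw [hc, mul_comm e c, Nat.mul_div_assoc c (Nat.gcd_dvd_left e s), mul_comm]⟩
      have h2 : s ^ 2 / Nat.gcd e s = s * (s / Nat.gcd e s) := by
        rw [sq, Nat.mul_div_assoc s hgs]
      rw [h2] at h1
      exact (Nat.coprime_div_gcd_div_gcd hg0).dvd_of_dvd_mul_right h1
    rw [Finset.mem_product, Nat.mem_divisors, Nat.mem_divisors]
    exact ⟨⟨hgs, hs0.ne'⟩, ⟨hds, hs0.ne'⟩⟩
  apply Finset.sum_lt_sum_of_subset hsub (i := (1, s))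
  · rw [Finset.mem_product, Nat.mem_divisors, Nat.mem_divisors]
    exact ⟨⟨one_dvd s, hs0.ne'⟩, ⟨dvd_rfl, hs0.ne'⟩⟩
  · intro hmem
    simp only [Finset.mem_image] at hmem
    obtain ⟨e, he, heq⟩ := hmem
    have h1 := congrArg Prod.fst heq
    have h2 := congrArg Prod.snd heq
    simp only at h1 h2
    have hes : e = s := by
      have h3 := Nat.mul_div_cancel' (Nat.gcd_dvd_left e s)
      rw [h2, h1, one_mul] at h3
      omega
    subst hes
    rw [Nat.gcd_self] at h1
    omega
  · simp [hs0]
  · intro j _ _; exact Nat.zero_le _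


theorem stmt_5 (k m s : ℕ) (hk : 1 < k) (hm : 1 < m) (hodd : Odd (k * m))
    (hspoof : σ 1 k * (m + 1) = 2 * (k * m)) (hcomp : ¬ m.Prime)
    (hs : 0 < s) (hsq : s ^ 2 = k) :
    3 / Real.sqrt 5 < (σ 1 s : ℝ) / (s : ℝ) ∧ (σ 1 s : ℝ) / (s : ℝ) < 2 := by
  have hk0 : 0 < k := by omega
  have hs1 : 1 < s := by nlinarith
  have hmodd : Odd m := (Nat.odd_mul.mp hodd).2
  have hm9 : 9 ≤ m := by
    by_contra hlt
    push_neg at hlt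
    interval_cases m <;>
      first
        | exact (Nat.not_odd_iff_even.mpr (by decide)) hmodd
        | exact hcomp (by norm_num)
  have hσk2 : σ 1 k < 2 * k := by nlinarith [hspoof]
  have h95 : 9 * k ≤ 5 * σ 1 k := by nlinarith [hspoof]
  have hA : s * σ 1 s ≤ σ 1 k := by rw [← hsq]; exact aux_mul_le s hs
  have hB : σ 1 k < σ 1 s ^ 2 := by rw [← hsq]; exact aux_sq_lt s hs1
  have nat1 : 9 * s ^ 2 < 5 * σ 1 s ^ 2 := by rw [hsq]; nlinarith [h95, hB]
  have nat2 : σ 1 s < 2 * s := by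
    have : s * σ 1 s < 2 * (s * s) := by
      calc s * σ 1 s ≤ σ 1 k := hA
        _ < 2 * k := hσk2
        _ = 2 * (s * s) := by rw [← hsq]; ring
    nlinarith
  have hsR : (0:ℝ) < (s : ℝ) := by exact_mod_cast hs
  have hσR : (0:ℝ) ≤ (σ 1 s : ℝ) := by positivity
  constructor
  · have h5 : (0:ℝ) < Real.sqrt 5 := Real.sqrt_pos.mpr (by norm_num)
    have hx0 : 0 ≤ (σ 1 s : ℝ) / s := by positivity
    refine lt_of_pow_lt_pow_left₀ 2 hx0 ?_
    have h1 : (3 / Real.sqrt 5) ^ 2 = 9 / 5 := by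
      rw [div_pow, Real.sq_sqrt (by norm_num : (0:ℝ) ≤ 5)]
      norm_num
    have h2 : ((σ 1 s : ℝ) / s) ^ 2 = (σ 1 s : ℝ) ^ 2 / (s : ℝ) ^ 2 := by rw [div_pow]
    rw [h1, h2, div_lt_div_iff₀ (by norm_num) (by positivity)]
    have h3 : (9:ℝ) * (s:ℝ) ^ 2 < 5 * (σ 1 s : ℝ) ^ 2 := by exact_mod_cast nat1
    nlinarith [h3]
  · rw [div_lt_iff₀ hsR]
    exact_mod_cast nat2.trans_le (by nlinarith)
end

section
/- If n = km > 1 is a spoof odd perfect number, then k ≠ m. -/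
open ArithmeticFunction
open scoped ArithmeticFunction.sigma

theorem stmt_6 (k m : ℕ) (hk : 1 < k) (hm : 1 < m) (hodd : Odd (k * m))
    (hspoof : σ 1 k * (m + 1) = 2 * (k * m)) :
    k ≠ m := by
  intro h
  subst h
  have hdvd : (k + 1) ∣ 2 * (k * k) := ⟨σ 1 k, by linarith [hspoof]⟩
  have hcop : Nat.Coprime (k + 1) (k * k) :=
    have h1 : Nat.Coprime (k + 1) k := by simp [Nat.coprime_comm]
    h1.mul_right h1
  have h2 : (k + 1) ∣ 2 := (Nat.Coprime.dvd_of_dvd_mul_right hcop) hdvd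
  have := Nat.le_of_dvd (by norm_num) h2
  omega
end

section
/- Let n = km > 1 be a spoof odd perfect number with m composite. Then k is almost perfect (that is, σ(k) = 2k − 1) if and only if k < m. -/
open ArithmeticFunction
open scoped ArithmeticFunction.sigma

theorem stmt_7 (k m : ℕ) (hk : 1 < k) (hm : 1 < m) (hodd : Odd (k * m))
    (hspoof : σ 1 k * (m + 1) = 2 * (k * m)) (hcomp : ¬ m.Prime) :
    σ 1 k = 2 * k - 1 ↔ k < m := by
  have hZ : (σ 1 k : ℤ) * (m + 1) = 2 * (k * m) := by exact_mod_cast hspoof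
  constructor
  · intro h
    have hS : (σ 1 k : ℤ) = 2 * k - 1 := by omega
    have hm' : (m : ℤ) = 2 * k - 1 := by linear_combination ((m : ℤ) + 1) * hS - hZ
    omega
  · intro hkm
    have hkm' : (k : ℤ) < m := by exact_mod_cast hkm
    have hk' : (1 : ℤ) < k := by exact_mod_cast hk
    have hj : (2 * (k : ℤ) - σ 1 k) * (m + 1) = 2 * k := by linear_combination -hZ
    have h1 : 1 ≤ 2 * (k : ℤ) - σ 1 k := by nlinarith
    have h2 : 2 * (k : ℤ) - σ 1 k ≤ 1 := by nlinarith
    omega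
end

section
/- Let n = km > 1 be a spoof odd perfect number. If m < k, then (m+1)/k ≤ 2/3 and 3 ≤ σ(k)/m; in particular, (m+1)/k ≤ 2/3 < 3 ≤ σ(k)/m. -/
open ArithmeticFunction
open scoped ArithmeticFunction.sigma

theorem stmt_8 (k m : ℕ) (hk : 1 < k) (hm : 1 < m) (hodd : Odd (k * m))
    (hspoof : σ 1 k * (m + 1) = 2 * (k * m)) (hlt : m < k) :
    ((m : ℚ) + 1) / (k : ℚ) ≤ 2 / 3 ∧ (3 : ℚ) ≤ (σ 1 k : ℚ) / (m : ℚ) := by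
  have hko : Odd k := (Nat.odd_mul.mp hodd).1
  have hmo : Odd m := (Nat.odd_mul.mp hodd).2
  -- (m+1) ∣ 2*k
  have hdvd : (m + 1) ∣ 2 * k := by
    have h1 : (m + 1) ∣ 2 * k * m := ⟨σ 1 k, by linarith [hspoof]⟩
    have hcop : Nat.Coprime (m + 1) m := by simp
    exact (Nat.Coprime.dvd_of_dvd_mul_right hcop) h1
  obtain ⟨d, hd⟩ := hdvd
  -- k ≠ m + 1 by parity
  have hne : k ≠ m + 1 := by
    rintro rfl
    obtain ⟨a, ha⟩ := hko
    obtain ⟨b, hb⟩ := hmo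
    omega
  have hk1 : m + 1 < k := lt_of_le_of_ne hlt (Ne.symm hne)
  have hd3 : 3 ≤ d := by
    by_contra h
    interval_cases d <;> omega
  have h32 : 3 * (m + 1) ≤ 2 * k := by nlinarith
  have hkpos : (0 : ℚ) < (k : ℚ) := by exact_mod_cast Nat.lt_of_lt_of_le Nat.zero_lt_one hk.le
  have hmpos : (0 : ℚ) < (m : ℚ) := by exact_mod_cast Nat.lt_of_lt_of_le Nat.zero_lt_one hm.le
  constructor
  · rw [div_le_div_iff₀ hkpos (by norm_num)]
    have : (3 : ℚ) * (m + 1) ≤ 2 * k := by exact_mod_cast h32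
    linarith
  · rw [le_div_iff₀ hmpos]
    have hσ : 3 * m ≤ σ 1 k := by
      have h1 : 3 * m * (m + 1) ≤ σ 1 k * (m + 1) := by nlinarith
      exact Nat.le_of_mul_le_mul_right h1 (by omega)
    exact_mod_cast hσ
end

section
/- Let n = km > 1 be a spoof odd perfect number with m composite. If m < k, then 131/45 ≤ (m+1)/m + σ(k)/k < 3 and 3 < 11/3 ≤ (m+1)/k + σ(k)/m. -/
open ArithmeticFunction
open scoped ArithmeticFunction.sigma

theorem stmt_9 (k m : ℕ) (hk : 1 < k) (hm : 1 < m) (hodd : Odd (k * m))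
    (hspoof : σ 1 k * (m + 1) = 2 * (k * m)) (hcomp : ¬ m.Prime) (hlt : m < k) :
    (131 : ℚ) / 45 ≤ ((m : ℚ) + 1) / (m : ℚ) + (σ 1 k : ℚ) / (k : ℚ) ∧
      ((m : ℚ) + 1) / (m : ℚ) + (σ 1 k : ℚ) / (k : ℚ) < 3 ∧
      (11 : ℚ) / 3 ≤ ((m : ℚ) + 1) / (k : ℚ) + (σ 1 k : ℚ) / (m : ℚ) := by
  obtain ⟨hko, hmo⟩ := Nat.odd_mul.mp hodd
  -- m ≥ 9
  obtain ⟨d, hd, hd2, hdm⟩ := Nat.exists_dvd_of_not_prime2 hm hcomp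
  obtain ⟨e, he⟩ := hd
  have hdeo : Odd d ∧ Odd e := Nat.odd_mul.mp (he ▸ hmo)
  have hd3 : 3 ≤ d := by rcases hdeo.1 with ⟨t, ht⟩; omega
  have he3 : 3 ≤ e := by
    rcases hdeo.2 with ⟨t, ht⟩
    have : e ≠ 1 := by rintro rfl; omega
    omega
  have hm9 : 9 ≤ m := by
    calc 9 = 3 * 3 := rfl
    _ ≤ d * e := Nat.mul_le_mul hd3 he3
    _ = m := he.symm
  -- extract c with 2k = (m+1)*c
  have hdvd : (m + 1) ∣ 2 * k := by
    have h1 : (m + 1) ∣ 2 * k * m :=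
      ⟨σ 1 k, by rw [mul_comm (m+1), hspoof]; ring⟩
    exact (by simp : Nat.Coprime (m+1) m).dvd_of_dvd_mul_right h1
  obtain ⟨c, hc⟩ := hdvd
  have hS : σ 1 k = c * m := by
    have h2 : σ 1 k * (m + 1) = c * m * (m + 1) := by
      calc σ 1 k * (m + 1) = 2 * (k * m) := hspoof
      _ = (2 * k) * m := by ring
      _ = ((m + 1) * c) * m := by rw [hc]
      _ = c * m * (m + 1) := by ring
    exact Nat.eq_of_mul_eq_mul_right (by omega) h2
  -- c odd and c ≥ 3
  obtain ⟨t, ht⟩ := hmo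
  have hkco : k = (t + 1) * c := by
    have h2 : 2 * k = 2 * ((t + 1) * c) := by rw [hc, ht]; ring
    omega
  have hco : Odd c := (Nat.odd_mul.mp (hkco ▸ hko)).2
  have hc2 : 2 ≤ c := by nlinarith
  have hc3 : 3 ≤ c := by rcases hco with ⟨u, hu⟩; omega
  -- rational setup
  have hm0 : (0:ℚ) < (m:ℚ) := by positivity
  have hk0 : (0:ℚ) < (k:ℚ) := by exact_mod_cast (by omega : 0 < k)
  have hm10 : (0:ℚ) < (m:ℚ) + 1 := by positivity
  have hc0 : (0:ℚ) < (c:ℚ) := by exact_mod_cast (by omega : 0 < c)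
  have hm9q : (9:ℚ) ≤ (m:ℚ) := by exact_mod_cast hm9
  have hc3q : (3:ℚ) ≤ (c:ℚ) := by exact_mod_cast hc3
  have hcq : 2 * (k:ℚ) = ((m:ℚ) + 1) * c := by exact_mod_cast hc
  have hSq : ((σ 1 k : ℕ) : ℚ) = (c:ℚ) * (m:ℚ) := by exact_mod_cast hS
  have key : ((σ 1 k : ℕ) : ℚ) / (k:ℚ) = 2 * (m:ℚ) / ((m:ℚ) + 1) := by
    rw [div_eq_div_iff hk0.ne' hm10.ne', hSq]; nlinarith
  have key2 : ((m:ℚ) + 1) / (k:ℚ) = 2 / (c:ℚ) := by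
    rw [div_eq_div_iff hk0.ne' hc0.ne']; linarith
  have key3 : ((σ 1 k : ℕ) : ℚ) / (m:ℚ) = (c:ℚ) := by
    rw [hSq, mul_div_assoc, div_self hm0.ne', mul_one]
  refine ⟨?_, ?_, ?_⟩
  · rw [key, div_add_div _ _ hm0.ne' hm10.ne', le_div_iff₀ (by positivity)]
    nlinarith [sq_nonneg ((m:ℚ) - 9)]
  · rw [key, div_add_div _ _ hm0.ne' hm10.ne', div_lt_iff₀ (by positivity)]
    nlinarith
  · rw [key2, key3, div_add' _ _ _ hc0.ne', le_div_iff₀ hc0]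
    nlinarith [sq_nonneg ((c:ℚ) - 3)]
end

section
/- Let n = km > 1 be a spoof odd perfect number with m composite, and let s be the positive integer with s² = k. Then (m+1)/m < σ(s)/s; consequently, if σ(s) < m+1 then s < m, and if m < s then m+1 < σ(s). -/
open ArithmeticFunction
open scoped ArithmeticFunction.sigma

lemma sigma_sq_le_aux (s : ℕ) (hs : 0 < s) : σ 1 (s ^ 2) ≤ (σ 1 s) ^ 2 := by
  rw [sigma_one_apply, sigma_one_apply, sq (∑ d ∈ s.divisors, d),
    Finset.sum_mul_sum, ← Finset.sum_product']
  set f : ℕ → ℕ × ℕ := fun n => (Nat.gcd n s, n / Nat.gcd n s) with hf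
  have hid : ∀ n ∈ (s ^ 2).divisors, (f n).1 * (f n).2 = n := by
    intro n hn
    exact Nat.mul_div_cancel' (Nat.gcd_dvd_left n s)
  have hinj : ∀ x ∈ (s ^ 2).divisors, ∀ y ∈ (s ^ 2).divisors, f x = f y → x = y := by
    intro x hx y hy hxy
    have := hid x hx
    rw [← hid x hx, ← hid y hy, hxy]
  have hsub : (s ^ 2).divisors.image f ⊆ s.divisors ×ˢ s.divisors := by
    intro p hp
    obtain ⟨n, hn, rfl⟩ := Finset.mem_image.mp hp
    obtain ⟨hdvd, hne⟩ := Nat.mem_divisors.mp hn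
    have hn0 : 0 < n := Nat.pos_of_dvd_of_pos hdvd (by positivity)
    have hg0 : 0 < Nat.gcd n s := Nat.gcd_pos_of_pos_left s hn0
    have h1 : Nat.gcd n s ∣ s := Nat.gcd_dvd_right n s
    have h2 : n ∣ Nat.gcd n s * s := by
      have : n ∣ Nat.gcd (n * s) (s * s) :=
        Nat.dvd_gcd (Dvd.intro s rfl) (by rwa [← sq])
      rwa [Nat.gcd_mul_right] at this
    have h3 : n / Nat.gcd n s ∣ s := by
      set g := Nat.gcd n s with hg
      obtain ⟨t, ht⟩ : g ∣ n := Nat.gcd_dvd_left n s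
      have hnt : n / g = t := by rw [ht]; exact Nat.mul_div_cancel_left t hg0
      rw [ht] at h2
      rw [hnt]
      exact (mul_dvd_mul_iff_left hg0.ne').mp h2
    simp only [Finset.mem_product, Nat.mem_divisors]
    exact ⟨⟨h1, hs.ne'⟩, ⟨h3, hs.ne'⟩⟩
  calc ∑ n ∈ (s ^ 2).divisors, n
      = ∑ n ∈ (s ^ 2).divisors, (f n).1 * (f n).2 := by
        exact (Finset.sum_congr rfl hid).symm
    _ = ∑ p ∈ (s ^ 2).divisors.image f, p.1 * p.2 := by rw [Finset.sum_image hinj]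
    _ ≤ ∑ p ∈ s.divisors ×ˢ s.divisors, p.1 * p.2 :=
        Finset.sum_le_sum_of_subset hsub

theorem stmt_13 (k m s : ℕ) (hk : 1 < k) (hm : 1 < m) (hodd : Odd (k * m))
    (hspoof : σ 1 k * (m + 1) = 2 * (k * m)) (hcomp : ¬ m.Prime)
    (hs : 0 < s) (hsq : s ^ 2 = k) :
    ((m : ℚ) + 1) / (m : ℚ) < (σ 1 s : ℚ) / (s : ℚ) ∧
      (σ 1 s < m + 1 → s < m) ∧ (m < s → m + 1 < σ 1 s) := by
  subst hsq
  have hm4 : 4 ≤ m := by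
    by_contra h
    push_neg at h
    interval_cases m
    · exact hcomp Nat.prime_two
    · exact hcomp Nat.prime_three
  have h2 : 2 * (s ^ 2 * m) ≤ (σ 1 s) ^ 2 * (m + 1) :=
    hspoof ▸ Nat.mul_le_mul_right _ (sigma_sq_le_aux s hs)
  have hkey : s * (m + 1) < m * σ 1 s := by
    by_contra h
    push_neg at h
    have hsq' : (m * σ 1 s) * (m * σ 1 s) ≤ (s * (m+1)) * (s * (m+1)) :=
      Nat.mul_le_mul h h
    have hA : 2 * (s ^ 2 * m) * m ^ 2 ≤ (σ 1 s) ^ 2 * (m + 1) * m ^ 2 :=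
      Nat.mul_le_mul_right _ h2
    have hB : (m * σ 1 s) * (m * σ 1 s) * (m + 1) ≤ (s * (m + 1)) * (s * (m + 1)) * (m + 1) :=
      Nat.mul_le_mul_right _ hsq'
    nlinarith [hA, hB, hm4, hs, Nat.one_le_iff_ne_zero.mpr (pow_ne_zero 2 hs.ne')]
  refine ⟨?_, ?_, ?_⟩
  · rw [div_lt_div_iff₀ (by positivity) (by positivity)]
    have hq : ((s : ℚ)) * ((m : ℚ) + 1) < (m : ℚ) * ((σ 1 s : ℕ) : ℚ) := by
      exact_mod_cast hkey
    push_cast at hq ⊢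
    nlinarith [hq]
  · intro h
    nlinarith [hkey, h]
  · intro h
    nlinarith [hkey, h]
end

section
/- Let n = km > 1 be a spoof odd perfect number with m composite, and let s be the positive integer with s² = k. If gcd(m, k) = 1 and m < s, then (m+1)/m + σ(s)/s < (m+1)/s + σ(s)/m, and moreover 1 + √(9/5) < (m+1)/s + σ(s)/m. -/
open ArithmeticFunction
open scoped ArithmeticFunction.sigma

lemma my_sum_image_le {α : Type*} [DecidableEq α] (u : Finset α) (g : α → ℕ) :
    ∑ x ∈ u.image g, x ≤ ∑ a ∈ u, g a := by
  classical
  induction u using Finset.induction with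
  | empty => simp
  | @insert a s h ih =>
    rw [Finset.image_insert, Finset.sum_insert h]
    by_cases hg : g a ∈ Finset.image g s
    · rw [Finset.insert_eq_self.mpr hg]
      exact ih.trans (Nat.le_add_left _ _)
    · rw [Finset.sum_insert hg]
      exact Nat.add_le_add_left ih _

lemma sigma_sq_le (s : ℕ) : σ 1 (s * s) ≤ σ 1 s * σ 1 s := by
  simp only [sigma_one_apply]
  rw [Nat.divisors_mul, Finset.mul_def, Finset.sum_mul_sum, ← Finset.sum_product']
  exact my_sum_image_le _ _

lemma sigma_ge (s : ℕ) (hs : 1 < s) : s + 1 ≤ σ 1 s := by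
  rw [sigma_one_apply]
  have hsub : ({1, s} : Finset ℕ) ⊆ s.divisors := by
    intro x hx
    simp only [Finset.mem_insert, Finset.mem_singleton] at hx
    rcases hx with rfl | rfl
    · exact Nat.one_mem_divisors.mpr (by omega)
    · exact Nat.mem_divisors_self _ (by omega)
  calc s + 1 = ∑ d ∈ ({1, s} : Finset ℕ), d := by
        rw [Finset.sum_pair (by omega)]; omega
    _ ≤ ∑ d ∈ s.divisors, d := Finset.sum_le_sum_of_subset hsub

theorem stmt_15 (k m s : ℕ) (hk : 1 < k) (hm : 1 < m) (hodd : Odd (k * m))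
    (hspoof : σ 1 k * (m + 1) = 2 * (k * m)) (hcomp : ¬ m.Prime)
    (hs : 0 < s) (hsq : s ^ 2 = k) (hgcd : Nat.gcd m k = 1) (hlt : m < s) :
    ((m : ℝ) + 1) / (m : ℝ) + (σ 1 s : ℝ) / (s : ℝ) <
        ((m : ℝ) + 1) / (s : ℝ) + (σ 1 s : ℝ) / (m : ℝ) ∧
      1 + Real.sqrt (9 / 5) < ((m : ℝ) + 1) / (s : ℝ) + (σ 1 s : ℝ) / (m : ℝ) := by
  have hmodd : Odd m := (Nat.odd_mul.mp hodd).2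
  have hm9 : 9 ≤ m := by
    by_contra h
    push_neg at h
    interval_cases m <;> simp_all (config := {decide := true})
  -- σ(s)² ≥ (9/5) s²
  have hσsq : σ 1 (s * s) * (m + 1) = 2 * ((s * s) * m) := by
    rw [← hsq, sq] at hspoof; exact hspoof
  have hkey : 9 * (s * s) * (m + 1) ≤ 5 * (σ 1 s * σ 1 s) * (m + 1) := by
    have h1 := sigma_sq_le s
    nlinarith [hσsq]
  have hs1 : 1 < s := lt_trans hm hlt
  have hσge : s + 1 ≤ σ 1 s := sigma_ge s hs1
  -- move to reals
  have hM9 : (9 : ℝ) ≤ (m : ℝ) := by exact_mod_cast hm9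
  have hMS : (m : ℝ) < (s : ℝ) := by exact_mod_cast hlt
  have hS0 : (0 : ℝ) < (s : ℝ) := by exact_mod_cast hs
  have hM0 : (0 : ℝ) < (m : ℝ) := by linarith
  have hTS : (s : ℝ) + 1 ≤ (σ 1 s : ℝ) := by exact_mod_cast hσge
  have hTsq : 9 * ((s:ℝ) * (s:ℝ)) ≤ 5 * ((σ 1 s : ℝ) * (σ 1 s : ℝ)) := by
    have h2 : (9 * (s * s) : ℕ) ≤ 5 * (σ 1 s * σ 1 s) :=
      Nat.le_of_mul_le_mul_right hkey (by omega)
    exact_mod_cast h2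
  have hT0 : (0 : ℝ) < (σ 1 s : ℝ) := by linarith
  set c : ℝ := Real.sqrt (9 / 5) with hc
  have hc1 : (1 : ℝ) ≤ c := by
    rw [hc]
    rw [show (1:ℝ) = Real.sqrt 1 by simp]
    exact Real.sqrt_le_sqrt (by norm_num)
  have hcS : c * (s:ℝ) ≤ (σ 1 s : ℝ) := by
    have h1 : c * (s:ℝ) = Real.sqrt (9 / 5 * (s:ℝ) ^ 2) := by
      rw [hc, Real.sqrt_mul (by norm_num), Real.sqrt_sq hS0.le]
    rw [h1]
    calc Real.sqrt (9 / 5 * (s:ℝ) ^ 2) ≤ Real.sqrt ((σ 1 s : ℝ) ^ 2) :=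
          Real.sqrt_le_sqrt (by nlinarith)
      _ = (σ 1 s : ℝ) := Real.sqrt_sq hT0.le
  constructor
  · rw [div_add_div _ _ (ne_of_gt hM0) (ne_of_gt hS0),
      div_add_div _ _ (ne_of_gt hS0) (ne_of_gt hM0),
      div_lt_div_iff₀ (by positivity) (by positivity)]
    nlinarith [mul_pos (mul_pos hM0 hS0)
      (mul_pos (sub_pos.mpr hMS) (show (0:ℝ) < (σ 1 s : ℝ) - ((m:ℝ) + 1) by linarith))]
  · rw [div_add_div _ _ (ne_of_gt hS0) (ne_of_gt hM0), lt_div_iff₀ (by positivity)]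
    have hcSM : (m:ℝ) ≤ c * (s:ℝ) := by
      nlinarith [mul_le_mul_of_nonneg_right hc1 hS0.le]
    have hkey2 : (0:ℝ) ≤ ((s:ℝ) - (m:ℝ)) * (c * (s:ℝ) - (m:ℝ)) :=
      mul_nonneg (by linarith) (by linarith)
    have h3 := mul_le_mul_of_nonneg_left hcS hS0.le
    clear hkey hσsq hspoof hTsq hodd hcomp hgcd hsq
    linarith [hkey2, h3, hM0]
end

section
/- Let n = km > 1 be a spoof odd perfect number with m composite, and let s be the positive integer with s² = k. Then (m+1)/m ≤ 10/9 < 3/√5 < σ(s)/s. -/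
open ArithmeticFunction
open scoped ArithmeticFunction.sigma

lemma aux_div_gcd_dvd (d s : ℕ) (hs : 0 < s) (hd : d ∣ s ^ 2) (hd0 : 0 < d) :
    d / Nat.gcd d s ∣ s := by
  have hg : Nat.gcd d s ∣ d := Nat.gcd_dvd_left d s
  have hg0 : 0 < Nat.gcd d s := Nat.gcd_pos_of_pos_right d hs
  have hq0 : 0 < d / Nat.gcd d s := Nat.div_pos (Nat.le_of_dvd hd0 hg) hg0
  rw [← Nat.factorization_le_iff_dvd hq0.ne' hs.ne', Nat.factorization_div hg,
    Nat.factorization_gcd hd0.ne' hs.ne']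
  intro p
  have hle : d.factorization ≤ (s ^ 2).factorization :=
    (Nat.factorization_le_iff_dvd hd0.ne' (by positivity)).mpr hd
  have h2 := hle p
  rw [Nat.factorization_pow] at h2
  simp only [Finsupp.smul_apply, smul_eq_mul] at h2
  simp only [Finsupp.tsub_apply, Finsupp.inf_apply]
  omega

lemma aux_sigma_sq_lt (s : ℕ) (hs : 1 < s) : σ 1 (s ^ 2) < (σ 1 s) ^ 2 := by
  have hs0 : 0 < s := by omega
  rw [sigma_one_apply, sigma_one_apply]
  have hsum : (∑ d ∈ s.divisors, d) ^ 2 = ∑ p ∈ s.divisors ×ˢ s.divisors, p.1 * p.2 := by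
    rw [sq, Finset.sum_mul_sum, Finset.sum_product]
  set φ : ℕ → ℕ × ℕ := fun d => (Nat.gcd d s, d / Nat.gcd d s) with hφ
  have hprod : ∀ d ∈ (s ^ 2).divisors, Nat.gcd d s * (d / Nat.gcd d s) = d := fun d _ =>
    Nat.mul_div_cancel' (Nat.gcd_dvd_left d s)
  have hmem : ∀ d ∈ (s ^ 2).divisors, φ d ∈ (s.divisors ×ˢ s.divisors).erase (1, s) := by
    intro d hd
    obtain ⟨hdvd, hne⟩ := Nat.mem_divisors.mp hd
    have hd0 : 0 < d := Nat.pos_of_mem_divisors hd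
    refine Finset.mem_erase.mpr ⟨?_, ?_⟩
    · intro hcontra
      have h1 : Nat.gcd d s = 1 := congrArg Prod.fst hcontra
      have h2 : d / Nat.gcd d s = s := congrArg Prod.snd hcontra
      rw [h1, Nat.div_one] at h2
      rw [h2, Nat.gcd_self] at h1
      omega
    · refine Finset.mem_product.mpr ⟨?_, ?_⟩
      · exact Nat.mem_divisors.mpr ⟨(Nat.gcd_dvd_right d s), hs0.ne'⟩
      · exact Nat.mem_divisors.mpr ⟨aux_div_gcd_dvd d s hs0 hdvd hd0, hs0.ne'⟩
  have hinj : ∀ x ∈ (s ^ 2).divisors, ∀ y ∈ (s ^ 2).divisors, φ x = φ y → x = y := by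
    intro x hx y hy hxy
    have hpx := hprod x hx
    have hpy := hprod y hy
    have h1 : Nat.gcd x s = Nat.gcd y s := congrArg Prod.fst hxy
    have h2 : x / Nat.gcd x s = y / Nat.gcd y s := congrArg Prod.snd hxy
    rw [← hpx, ← hpy, h2, h1]
  have himg : ∑ d ∈ (s ^ 2).divisors, d
      = ∑ p ∈ (s ^ 2).divisors.image φ, p.1 * p.2 := by
    rw [Finset.sum_image hinj]
    exact (Finset.sum_congr rfl hprod).symm
  have hsub : (s ^ 2).divisors.image φ ⊆ (s.divisors ×ˢ s.divisors).erase (1, s) := by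
    intro p hp
    obtain ⟨d, hd, rfl⟩ := Finset.mem_image.mp hp
    exact hmem d hd
  have h1s : (1, s) ∈ s.divisors ×ˢ s.divisors :=
    Finset.mem_product.mpr ⟨Nat.one_mem_divisors.mpr hs0.ne',
      Nat.mem_divisors_self s hs0.ne'⟩
  have hkey := Finset.add_sum_erase _ (fun p : ℕ × ℕ => p.1 * p.2) h1s
  simp only [one_mul] at hkey
  calc ∑ d ∈ (s ^ 2).divisors, d
      = ∑ p ∈ (s ^ 2).divisors.image φ, p.1 * p.2 := himg
    _ ≤ ∑ p ∈ (s.divisors ×ˢ s.divisors).erase (1, s), p.1 * p.2 :=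
        Finset.sum_le_sum_of_subset hsub
    _ < ∑ p ∈ s.divisors ×ˢ s.divisors, p.1 * p.2 := by omega
    _ = (∑ d ∈ s.divisors, d) ^ 2 := hsum.symm

theorem stmt_18 (k m s : ℕ) (hk : 1 < k) (hm : 1 < m) (hodd : Odd (k * m))
    (hspoof : σ 1 k * (m + 1) = 2 * (k * m)) (hcomp : ¬ m.Prime)
    (hs : 0 < s) (hsq : s ^ 2 = k) :
    ((m : ℝ) + 1) / (m : ℝ) ≤ 10 / 9 ∧ (10 : ℝ) / 9 < 3 / Real.sqrt 5 ∧
      3 / Real.sqrt 5 < (σ 1 s : ℝ) / (s : ℝ) := by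
  have hmodd : Odd m := (Nat.odd_mul.mp hodd).2
  have hm9 : 9 ≤ m := by
    rw [Nat.odd_iff] at hmodd
    by_contra h
    push_neg at h
    interval_cases m
    all_goals first
      | omega
      | (exact hcomp (by norm_num))
  have hs1 : 1 < s := by nlinarith
  have hsq5 : Real.sqrt 5 ^ 2 = 5 := Real.sq_sqrt (by norm_num)
  have hsqrt5pos : 0 < Real.sqrt 5 := Real.sqrt_pos.mpr (by norm_num)
  -- key nat inequality : 9 * s^2 < 5 * (σ 1 s)^2
  have hk9 : 9 * k ≤ 5 * σ 1 k := by nlinarith [hspoof, hm9, Nat.le_of_lt hk]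
  have hklt : σ 1 k < (σ 1 s) ^ 2 := hsq ▸ aux_sigma_sq_lt s hs1
  have hnat : 9 * s ^ 2 < 5 * (σ 1 s) ^ 2 := by
    rw [hsq]; omega
  refine ⟨?_, ?_, ?_⟩
  · have hmpos : (0 : ℝ) < m := by positivity
    rw [div_le_div_iff₀ hmpos (by norm_num)]
    have : (9 : ℝ) ≤ m := by exact_mod_cast hm9
    linarith
  · have h0 : (0 : ℝ) ≤ 3 / Real.sqrt 5 := by positivity
    refine lt_of_pow_lt_pow_left₀ 2 h0 ?_
    rw [div_pow, div_pow, hsq5]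
    norm_num
  · have hspos : (0 : ℝ) < s := by exact_mod_cast hs
    have hσ : (0 : ℝ) ≤ (σ 1 s : ℝ) / s := by positivity
    refine lt_of_pow_lt_pow_left₀ 2 hσ ?_
    rw [div_pow, div_pow, hsq5]
    rw [div_lt_div_iff₀ (by norm_num) (by positivity)]
    have : (9 : ℝ) * s ^ 2 < 5 * (σ 1 s : ℝ) ^ 2 := by exact_mod_cast hnat
    linarith
end
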